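/- Let G be a nonabelian group generated by two elements x, y satisfying x y x^{-1} = y^{1+p^k} for some k ≥ 1, and let θ: G → Z_p^× be a homomorphism with θ(x) = 1 + p^k and θ(y) = 1. Then for every g ∈ ker(θ) and every h ∈ G, one has h g h^{-1} = g^{θ(h)}; that is, G is θ-abelian. -/

import Mathlib

open PadicInt

section NT
variable {p : ℕ} [hp : Fact p.Prime]

/-- binomial expansion up to order 3 -/
lemma aux_cube {R : Type*} [CommRing R] (d : R) (n : ℕ) :
    ∃ t : R, (1 + d) ^ n = 1 + (n : R) * d + (n.choose 2 : R) * d ^ 2 + d ^ 3 * t := by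
  induction n with
  | zero => exact ⟨0, by simp⟩
  | succ n ih =>
    obtain ⟨t, ht⟩ := ih
    refine ⟨t + (n.choose 2 : R) + d * t, ?_⟩
    have hch : ((n + 1).choose 2 : R) = (n.choose 2 : R) + (n : R) := by
      rw [Nat.choose_succ_succ n 1, Nat.choose_one_right]
      push_cast; ring
    calc (1 + d) ^ (n + 1) = (1 + d) ^ n * (1 + d) := by ring
      _ = (1 + (n : R) * d + (n.choose 2 : R) * d ^ 2 + d ^ 3 * t) * (1 + d) := by rw [ht]
      _ = 1 + ((n : R) + 1) * d + ((n.choose 2 : R) + (n : R)) * d ^ 2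
            + d ^ 3 * (t + (n.choose 2 : R) + d * t) := by ring
      _ = _ := by rw [hch]; push_cast; ring

lemma pr : (1 : ℝ) < (p : ℝ) := by exact_mod_cast hp.out.one_lt

lemma prpos : (0 : ℝ) < (p : ℝ) := lt_trans one_pos pr

/-- ‖N^n - 1‖ ≤ ‖N - 1‖ -/
lemma pow_sub_one_norm_le (M : ℤ_[p]) (n : ℕ) : ‖M ^ n - 1‖ ≤ ‖M - 1‖ := by
  obtain ⟨t, ht⟩ := sub_dvd_pow_sub_pow M 1 n
  rw [one_pow] at ht
  rw [ht, norm_mul]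
  calc ‖M - 1‖ * ‖t‖ ≤ ‖M - 1‖ * 1 := by
        exact mul_le_mul_of_nonneg_left t.norm_le_one (norm_nonneg _)
    _ = ‖M - 1‖ := mul_one _

lemma step_le (N : ℤ_[p]) (κ : ℕ) (hκ : 1 ≤ κ) (h : ‖N - 1‖ ≤ (p : ℝ) ^ (-(κ : ℤ))) :
    ‖N ^ p - 1‖ ≤ (p : ℝ) ^ (-((κ : ℤ) + 1)) := by
  obtain ⟨t, ht⟩ := aux_cube (N - 1) p
  have hN : N ^ p - 1 = (p : ℤ_[p]) * (N - 1) + (p.choose 2 : ℤ_[p]) * (N - 1) ^ 2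
      + (N - 1) ^ 3 * t := by
    have : N = 1 + (N - 1) := by ring
    nth_rewrite 1 [this]
    rw [ht]; ring
  have h1 : ‖(p : ℤ_[p]) * (N - 1)‖ ≤ (p : ℝ) ^ (-((κ : ℤ) + 1)) := by
    rw [norm_mul, norm_p]
    calc (p : ℝ)⁻¹ * ‖N - 1‖ ≤ (p : ℝ)⁻¹ * (p : ℝ) ^ (-(κ : ℤ)) := by
          exact mul_le_mul_of_nonneg_left h (by positivity)
      _ = (p : ℝ) ^ (-((κ : ℤ) + 1)) := by
          rw [← zpow_neg_one, ← zpow_add₀ (ne_of_gt (prpos (p := p)))]; ring_nf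
  have hd : ‖N - 1‖ ≤ (p : ℝ) ^ (-(1 : ℤ)) :=
    h.trans (zpow_le_zpow_right₀ (le_of_lt pr) (by omega))
  have h2 : ‖(p.choose 2 : ℤ_[p]) * (N - 1) ^ 2‖ ≤ (p : ℝ) ^ (-((κ : ℤ) + 1)) := by
    rw [norm_mul, norm_pow]
    calc ‖(p.choose 2 : ℤ_[p])‖ * ‖N - 1‖ ^ 2 ≤ 1 * (‖N - 1‖ * ‖N - 1‖) := by
          rw [sq]
          exact mul_le_mul (norm_le_one _) le_rfl (by positivity) zero_le_one
      _ = ‖N - 1‖ * ‖N - 1‖ := one_mul _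
      _ ≤ (p : ℝ) ^ (-(κ : ℤ)) * (p : ℝ) ^ (-(1 : ℤ)) :=
          mul_le_mul h hd (norm_nonneg _) (by positivity)
      _ = (p : ℝ) ^ (-((κ : ℤ) + 1)) := by
          rw [← zpow_add₀ (ne_of_gt (prpos (p := p)))]; ring_nf
  have h3 : ‖(N - 1) ^ 3 * t‖ ≤ (p : ℝ) ^ (-((κ : ℤ) + 1)) := by
    rw [norm_mul, norm_pow]
    calc ‖N - 1‖ ^ 3 * ‖t‖ ≤ ‖N - 1‖ ^ 3 * 1 :=
          mul_le_mul_of_nonneg_left t.norm_le_one (by positivity)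
      _ = ‖N - 1‖ ^ 3 := mul_one _
      _ ≤ ((p : ℝ) ^ (-(κ : ℤ))) ^ 3 := by
          apply pow_le_pow_left₀ (norm_nonneg _) h
      _ = (p : ℝ) ^ ((-(κ : ℤ)) * 3) := by rw [← zpow_natCast ((p:ℝ) ^ (-(κ:ℤ))) 3, ← zpow_mul]; norm_num
      _ ≤ (p : ℝ) ^ (-((κ : ℤ) + 1)) := zpow_le_zpow_right₀ (le_of_lt pr) (by omega)
  rw [hN]
  calc ‖(p : ℤ_[p]) * (N - 1) + (p.choose 2 : ℤ_[p]) * (N - 1) ^ 2 + (N - 1) ^ 3 * t‖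
      ≤ max ‖(p : ℤ_[p]) * (N - 1) + (p.choose 2 : ℤ_[p]) * (N - 1) ^ 2‖ ‖(N - 1) ^ 3 * t‖ :=
        nonarchimedean _ _
    _ ≤ max (max ‖(p : ℤ_[p]) * (N - 1)‖ ‖(p.choose 2 : ℤ_[p]) * (N - 1) ^ 2‖) ‖(N-1)^3 * t‖ :=
        max_le_max (nonarchimedean _ _) le_rfl
    _ ≤ (p : ℝ) ^ (-((κ : ℤ) + 1)) := by
        exact max_le (max_le h1 h2) h3


lemma norm_le_inv_p {c : ℤ_[p]} (h : (p : ℤ_[p]) ∣ c) : ‖c‖ ≤ (p : ℝ) ^ (-(1 : ℤ)) := by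
  obtain ⟨m, hm⟩ := h
  rw [hm, norm_mul, norm_p, zpow_neg_one]
  calc (p:ℝ)⁻¹ * ‖m‖ ≤ (p:ℝ)⁻¹ * 1 := mul_le_mul_of_nonneg_left m.norm_le_one (by positivity)
    _ = (p:ℝ)⁻¹ := mul_one _

lemma step_exact (N : ℤ_[p]) (κ : ℕ) (hκ : 1 ≤ κ) (hside : p = 2 → 2 ≤ κ)
    (h : ‖N - 1‖ = (p : ℝ) ^ (-(κ : ℤ))) :
    ‖N ^ p - 1‖ = (p : ℝ) ^ (-((κ : ℤ) + 1)) := by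
  obtain ⟨t, ht⟩ := aux_cube (N - 1) p
  have hN : N ^ p - 1 = (p : ℤ_[p]) * (N - 1) + ((p.choose 2 : ℤ_[p]) * (N - 1) ^ 2
      + (N - 1) ^ 3 * t) := by
    have hone : N = 1 + (N - 1) := by ring
    nth_rewrite 1 [hone]
    rw [ht]; ring
  have h1 : ‖(p : ℤ_[p]) * (N - 1)‖ = (p : ℝ) ^ (-((κ : ℤ) + 1)) := by
    rw [norm_mul, norm_p, h, ← zpow_neg_one,
      ← zpow_add₀ (ne_of_gt (prpos (p := p)))]
    ring_nf
  have h2 : ‖(p.choose 2 : ℤ_[p]) * (N - 1) ^ 2‖ < (p : ℝ) ^ (-((κ : ℤ) + 1)) := by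
    rw [norm_mul, norm_pow, h]
    by_cases hp2 : p = 2
    · have hκ2 := hside hp2
      calc ‖(p.choose 2 : ℤ_[p])‖ * ((p:ℝ) ^ (-(κ:ℤ))) ^ 2
          ≤ 1 * ((p:ℝ) ^ (-(κ:ℤ))) ^ 2 :=
            mul_le_mul_of_nonneg_right (norm_le_one _) (by positivity)
        _ = (p:ℝ) ^ ((-(κ:ℤ)) * 2) := by
            rw [one_mul, ← zpow_natCast ((p:ℝ) ^ (-(κ:ℤ))) 2, ← zpow_mul]; norm_num
        _ < (p:ℝ) ^ (-((κ:ℤ)+1)) := zpow_lt_zpow_right₀ pr (by omega)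
    · have hdvd : (p : ℤ_[p]) ∣ (p.choose 2 : ℤ_[p]) := by
        obtain ⟨m, hm⟩ := Nat.Prime.dvd_choose_self hp.out (by norm_num)
          (lt_of_le_of_ne hp.out.two_le (fun hh => hp2 hh.symm))
        exact ⟨(m : ℤ_[p]), by rw [hm]; push_cast; ring⟩
      calc ‖(p.choose 2 : ℤ_[p])‖ * ((p:ℝ) ^ (-(κ:ℤ))) ^ 2
          ≤ (p:ℝ) ^ (-(1:ℤ)) * ((p:ℝ) ^ (-(κ:ℤ))) ^ 2 :=
            mul_le_mul_of_nonneg_right (norm_le_inv_p hdvd) (by positivity)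
        _ = (p:ℝ) ^ ((-(1:ℤ)) + (-(κ:ℤ)) * 2) := by
            rw [← zpow_natCast ((p:ℝ) ^ (-(κ:ℤ))) 2, ← zpow_mul,
              ← zpow_add₀ (ne_of_gt (prpos (p := p)))]; norm_num
        _ < (p:ℝ) ^ (-((κ:ℤ)+1)) := zpow_lt_zpow_right₀ pr (by omega)
  have h3 : ‖(N - 1) ^ 3 * t‖ < (p : ℝ) ^ (-((κ : ℤ) + 1)) := by
    rw [norm_mul, norm_pow, h]
    calc ((p:ℝ) ^ (-(κ:ℤ))) ^ 3 * ‖t‖ ≤ ((p:ℝ) ^ (-(κ:ℤ))) ^ 3 * 1 :=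
          mul_le_mul_of_nonneg_left t.norm_le_one (by positivity)
      _ = (p:ℝ) ^ ((-(κ:ℤ)) * 3) := by
          rw [mul_one, ← zpow_natCast ((p:ℝ) ^ (-(κ:ℤ))) 3, ← zpow_mul]; norm_num
      _ < (p:ℝ) ^ (-((κ:ℤ)+1)) := zpow_lt_zpow_right₀ pr (by omega)
  have h23 : ‖(p.choose 2 : ℤ_[p]) * (N - 1) ^ 2 + (N - 1) ^ 3 * t‖
      < (p : ℝ) ^ (-((κ : ℤ) + 1)) :=
    lt_of_le_of_lt (nonarchimedean _ _) (max_lt h2 h3)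
  rw [hN, norm_add_eq_max_of_ne (by rw [h1]; exact ne_of_gt h23), h1]
  exact max_eq_left (le_of_lt (h1 ▸ h23))

lemma pow_unit_exp (N : ℤ_[p]) (κ : ℕ) (hκ : 1 ≤ κ)
    (h : ‖N - 1‖ = (p : ℝ) ^ (-(κ : ℤ))) (r : ℕ) (hr : ¬ p ∣ r) :
    ‖N ^ r - 1‖ = (p : ℝ) ^ (-(κ : ℤ)) := by
  have hgeom : (∑ i ∈ Finset.range r, N ^ i) * (N - 1) = N ^ r - 1 := geom_sum_mul N r
  have hsum : ∃ T : ℤ_[p], ∑ i ∈ Finset.range r, N ^ i = (r : ℤ_[p]) + (N - 1) * T := by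
    have hdvd : (N - 1) ∣ (∑ i ∈ Finset.range r, N ^ i) - (r : ℤ_[p]) := by
      have : (∑ i ∈ Finset.range r, N ^ i) - (r : ℤ_[p])
          = ∑ i ∈ Finset.range r, (N ^ i - 1) := by
        rw [Finset.sum_sub_distrib]
        simp
      rw [this]
      exact Finset.dvd_sum fun i _ => by
        simpa using sub_dvd_pow_sub_pow N 1 i
    obtain ⟨T, hT⟩ := hdvd
    exact ⟨T, by linear_combination hT⟩
  obtain ⟨T, hT⟩ := hsum
  have hrnorm : ‖(r : ℤ_[p])‖ = 1 := by
    have : ¬ ‖((r : ℤ) : ℤ_[p])‖ < 1 := by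
      rw [PadicInt.norm_int_lt_one_iff_dvd]
      exact_mod_cast hr
    have hle : ‖((r : ℤ) : ℤ_[p])‖ ≤ 1 := norm_le_one _
    push_cast at this hle ⊢
    linarith [lt_or_eq_of_le hle]
  have hsmall : ‖(N - 1) * T‖ < 1 := by
    rw [norm_mul, h]
    calc (p:ℝ) ^ (-(κ:ℤ)) * ‖T‖ ≤ (p:ℝ) ^ (-(κ:ℤ)) * 1 :=
          mul_le_mul_of_nonneg_left T.norm_le_one (by positivity)
      _ = (p:ℝ) ^ (-(κ:ℤ)) := mul_one _
      _ < (p:ℝ) ^ (0:ℤ) := zpow_lt_zpow_right₀ pr (by omega)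
      _ = 1 := zpow_zero _
  have hsumnorm : ‖∑ i ∈ Finset.range r, N ^ i‖ = 1 := by
    rw [hT, norm_add_eq_max_of_ne (by rw [hrnorm]; exact ne_of_gt hsmall), hrnorm]
    exact max_eq_left (le_of_lt hsmall)
  rw [← hgeom, norm_mul, hsumnorm, one_mul, h]

lemma pow_neg_lt_one (κ : ℕ) (hκ : 1 ≤ κ) : (p:ℝ) ^ (-(κ:ℤ)) < 1 := by
  calc (p:ℝ) ^ (-(κ:ℤ)) < (p:ℝ) ^ (0:ℤ) := zpow_lt_zpow_right₀ pr (by omega)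
    _ = 1 := zpow_zero _

lemma keyNT (k : ℕ) (hk : 1 ≤ k) (f : ℤ_[p] → ℤ_[p]) (hf : Continuous f)
    (hadd : ∀ a b, f (a + b) = f a * f b) (hone : f 1 = 1 + (p : ℤ_[p]) ^ k) :
    ∀ a : ℤ_[p], f a = 1 → a = 0 := by
  have hppos := prpos (p := p)
  have hf1 : f 1 ≠ 0 := by
    rw [hone]
    intro h0
    have h1 : (1 : ℤ_[p]) = -((p:ℤ_[p])^k) := by linear_combination h0
    have h2 : (1:ℝ) = (p:ℝ)^(-(k:ℤ)) := by
      have h3 := congrArg (fun z : ℤ_[p] => ‖z‖) h1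
      simpa [PadicInt.norm_p_pow] using h3
    have h4 := pow_neg_lt_one (p := p) k hk
    linarith
  have hzero : f 0 = 1 := by
    have h := hadd 1 0
    rw [add_zero] at h
    have : f 1 * 1 = f 1 * f 0 := by rw [mul_one, ← h]
    exact (mul_left_cancel₀ hf1 this).symm
  have fnat : ∀ (c : ℤ_[p]) (n : ℕ), f ((n : ℤ_[p]) * c) = f c ^ n := by
    intro c n
    induction n with
    | zero => simpa using hzero
    | succ n ih =>
      have hcast : ((n + 1 : ℕ) : ℤ_[p]) * c = (n : ℤ_[p]) * c + c := by push_cast; ring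
      rw [hcast, hadd, ih, pow_succ]
  have fp : ∀ v : ℕ, f ((p : ℤ_[p]) ^ (v + 1)) = f ((p : ℤ_[p]) ^ v) ^ p := by
    intro v
    have hcast : ((p : ℤ_[p]) ^ (v + 1)) = ((p : ℕ) : ℤ_[p]) * (p : ℤ_[p]) ^ v := by ring
    rw [hcast, fnat]
  have hbase : f 1 - 1 = (p : ℤ_[p]) ^ k := by rw [hone]; ring
  have good : ∀ v : ℕ, ∃ κ : ℕ, 1 ≤ κ ∧ ‖f ((p:ℤ_[p])^v) - 1‖ = (p:ℝ) ^ (-(κ:ℤ)) ∧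
      ‖f ((p:ℤ_[p])^(v+1)) - 1‖ ≤ (p:ℝ) ^ (-((κ:ℤ)+1)) := by
    by_cases hcase : p = 2 ∧ k = 1
    · obtain ⟨hp2, hk1⟩ := hcase
      subst hp2; subst hk1
      have hf2 : f (((2:ℕ):ℤ_[2]) ^ 1) - 1 = ((2:ℕ) : ℤ_[2])^3 := by
        have h2 : (((2:ℕ):ℤ_[2]) ^ 1) = 1 + 1 := by push_cast; ring
        rw [h2, hadd 1 1, hone]
        push_cast; ring
      have chain : ∀ v : ℕ, ‖f (((2:ℕ):ℤ_[2])^(v+1)) - 1‖ = ((2:ℕ):ℝ) ^ (-((v:ℤ)+3)) := by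
        intro v
        induction v with
        | zero =>
          rw [zero_add, hf2, PadicInt.norm_p_pow]
          norm_num
        | succ v ih =>
          have hstep := step_exact (p := 2) (f (((2:ℕ):ℤ_[2])^(v+1))) (v+3) (by omega)
            (fun _ => by omega) (by rw [ih]; push_cast; ring_nf)
          rw [fp (v+1), hstep]
          push_cast; ring_nf
      intro v
      match v with
      | 0 =>
        refine ⟨1, le_rfl, ?_, ?_⟩
        · rw [pow_zero, hbase, pow_one, ← pow_one (((2:ℕ)):ℤ_[2]), PadicInt.norm_p_pow]
        · have c0 := chain 0
          rw [zero_add] at c0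
          rw [zero_add, c0]
          apply zpow_le_zpow_right₀ (le_of_lt pr)
          norm_num
      | (v+1) =>
        refine ⟨v + 3, by omega, ?_, ?_⟩
        · rw [chain v]; push_cast; ring_nf
        · rw [chain (v+1)]
          apply zpow_le_zpow_right₀ (le_of_lt pr)
          push_cast; omega
    · have hside : p = 2 → 2 ≤ k := by
        intro hp2
        rcases Nat.lt_or_ge k 2 with h | h
        · exact absurd ⟨hp2, by omega⟩ hcase
        · exact h
      have chain : ∀ v : ℕ, ‖f ((p:ℤ_[p])^v) - 1‖ = (p:ℝ) ^ (-((k:ℤ)+(v:ℤ))) := by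
        intro v
        induction v with
        | zero =>
          rw [pow_zero, hbase, PadicInt.norm_p_pow]
          norm_num
        | succ v ih =>
          have hstep := step_exact (f ((p:ℤ_[p])^v)) (k+v) (by omega)
            (fun h2 => by have := hside h2; omega) (by rw [ih]; push_cast; ring_nf)
          rw [fp v] at *
          rw [hstep]
          push_cast; ring_nf
      intro v
      refine ⟨k + v, by omega, ?_, ?_⟩
      · rw [chain v]; push_cast; ring_nf
      · rw [chain (v+1)]
        apply zpow_le_zpow_right₀ (le_of_lt pr)
        push_cast; omega
  intro a hfa
  by_contra ha0
  obtain ⟨κ, hκ1, hexact, hnext⟩ := good (a.valuation)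
  set v := (a.valuation) with hv
  have hspec := PadicInt.unitCoeff_spec ha0
  set u : ℤ_[p]ˣ := PadicInt.unitCoeff ha0 with huset
  set r : ℕ := PadicInt.appr (u : ℤ_[p]) 1 with hrset
  have hrsp := PadicInt.appr_spec 1 (u : ℤ_[p])
  rw [Ideal.mem_span_singleton] at hrsp
  obtain ⟨b, hb⟩ := hrsp
  have hu : (u : ℤ_[p]) = (r : ℤ_[p]) + (p:ℤ_[p]) * b := by
    rw [pow_one] at hb
    linear_combination hb
  have hpr : ¬ p ∣ r := by
    intro hdvd
    have h1 : ‖(u:ℤ_[p])‖ = 1 := PadicInt.norm_units u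
    have hrlt : ‖((r:ℕ):ℤ_[p])‖ < 1 := by
      have : ‖((r:ℤ):ℤ_[p])‖ < 1 := (PadicInt.norm_int_lt_one_iff_dvd r).mpr (by exact_mod_cast hdvd)
      push_cast at this ⊢
      exact this
    have hpb : ‖(p:ℤ_[p]) * b‖ < 1 := by
      rw [norm_mul]
      calc ‖(p:ℤ_[p])‖ * ‖b‖ ≤ ‖(p:ℤ_[p])‖ * 1 :=
            mul_le_mul_of_nonneg_left b.norm_le_one (norm_nonneg _)
        _ = ‖(p:ℤ_[p])‖ := mul_one _
        _ < 1 := by rw [PadicInt.norm_p]; rw [inv_lt_one_iff₀]; right; exact pr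
    have hmax := nonarchimedean ((r:ℤ_[p])) ((p:ℤ_[p])*b)
    rw [← hu, h1] at hmax
    have := max_lt hrlt hpb
    linarith
  have hdecomp : a = (r:ℤ_[p]) * (p:ℤ_[p])^v + (p:ℤ_[p])^(v+1) * b := by
    rw [hspec, hu]
    ring
  have hfa2 : f a = f ((r:ℤ_[p]) * (p:ℤ_[p])^v) * f ((p:ℤ_[p])^(v+1) * b) := by
    rw [hdecomp]; exact hadd _ _
  have hA : f ((r:ℤ_[p]) * (p:ℤ_[p])^v) = f ((p:ℤ_[p])^v) ^ r := fnat _ r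
  have hAnorm : ‖f ((p:ℤ_[p])^v) ^ r - 1‖ = (p:ℝ)^(-(κ:ℤ)) :=
    pow_unit_exp _ κ hκ1 hexact r hpr
  have hBnorm : ∀ c : ℤ_[p], ‖f ((p:ℤ_[p])^(v+1) * c) - 1‖ ≤ (p:ℝ)^(-((κ:ℤ)+1)) := by
    have hclosed : IsClosed {c : ℤ_[p] |
        ‖f ((p:ℤ_[p])^(v+1) * c) - 1‖ ≤ (p:ℝ)^(-((κ:ℤ)+1))} := by
      apply isClosed_le _ continuous_const
      exact ((hf.comp (continuous_const.mul continuous_id)).sub continuous_const).norm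
    have hmem : Set.range (Nat.cast : ℕ → ℤ_[p]) ⊆ {c : ℤ_[p] |
        ‖f ((p:ℤ_[p])^(v+1) * c) - 1‖ ≤ (p:ℝ)^(-((κ:ℤ)+1))} := by
      rintro _ ⟨n, rfl⟩
      show ‖f ((p:ℤ_[p])^(v+1) * (n:ℤ_[p])) - 1‖ ≤ _
      rw [mul_comm, fnat]
      exact (pow_sub_one_norm_le _ n).trans hnext
    intro c
    have hdense : Dense (Set.range (Nat.cast : ℕ → ℤ_[p])) := PadicInt.denseRange_natCast
    have : (Set.univ : Set ℤ_[p]) ⊆ closure (Set.range (Nat.cast : ℕ → ℤ_[p])) := by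
      rw [hdense.closure_eq]
    have hc : c ∈ closure {c : ℤ_[p] |
        ‖f ((p:ℤ_[p])^(v+1) * c) - 1‖ ≤ (p:ℝ)^(-((κ:ℤ)+1))} :=
      closure_mono hmem (this (Set.mem_univ c))
    rwa [hclosed.closure_eq] at hc
  have hBn := hBnorm b
  have hBsmall : ‖f ((p:ℤ_[p])^(v+1) * b) - 1‖ < (p:ℝ)^(-(κ:ℤ)) :=
    lt_of_le_of_lt hBn (zpow_lt_zpow_right₀ pr (by omega))
  have hB1 : ‖f ((p:ℤ_[p])^(v+1) * b)‖ = 1 := by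
    have hdec : f ((p:ℤ_[p])^(v+1) * b) = 1 + (f ((p:ℤ_[p])^(v+1) * b) - 1) := by ring
    rw [hdec, norm_add_eq_max_of_ne, norm_one]
    · exact max_eq_left (le_of_lt (lt_of_le_of_lt hBn (pow_neg_lt_one _ (by omega))))
    · rw [norm_one]
      exact ne_of_gt (lt_of_le_of_lt hBn (pow_neg_lt_one _ (by omega)))
  have hkey : f a - 1 = (f ((p:ℤ_[p])^v) ^ r - 1) * f ((p:ℤ_[p])^(v+1) * b)
      + (f ((p:ℤ_[p])^(v+1) * b) - 1) := by
    rw [hfa2, hA]; ring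
  have hfinal : ‖f a - 1‖ = (p:ℝ)^(-(κ:ℤ)) := by
    have hm1 : ‖(f ((p:ℤ_[p])^v) ^ r - 1) * f ((p:ℤ_[p])^(v+1) * b)‖ = (p:ℝ)^(-(κ:ℤ)) := by
      rw [norm_mul, hAnorm, hB1, mul_one]
    rw [hkey, norm_add_eq_max_of_ne (by rw [hm1]; exact ne_of_gt hBsmall), hm1]
    exact max_eq_left (le_of_lt (hm1 ▸ hBsmall))
  rw [hfa] at hfinal
  simp only [sub_self, norm_zero] at hfinal
  have : (0:ℝ) < (p:ℝ)^(-(κ:ℤ)) := by positivity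
  linarith

lemma extPadic {β : Type*} [TopologicalSpace β] [T2Space β] (F1 F2 : ℤ_[p] → β)
    (h1 : Continuous F1) (h2 : Continuous F2)
    (hint : ∀ n : ℤ, F1 ((n : ℤ_[p])) = F2 ((n : ℤ_[p]))) : ∀ c, F1 c = F2 c :=
  fun c => congrFun (PadicInt.denseRange_intCast.equalizer h1 h2 (funext fun n => hint n)) c

end NT

/-- Let `G` be a nonabelian pro-`p` group topologically generated by two elements
`x, y` with `x y x⁻¹ = y^(1+p^k)` (`k ≥ 1`), and let `θ : G → ℤ_pˣ` be a continuous
homomorphism with `θ x = 1 + p^k`, `θ y = 1`.  Let `P g c` denote the `p`-adic power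
`g^c` (the unique continuous extension of integral powers).  Then for every
`g ∈ ker θ` and every `h ∈ G` one has `h g h⁻¹ = g^(θ h)`: `G` is `θ`-abelian. -/
theorem stmt_5 (p : ℕ) [Fact p.Prime] (k : ℕ) (hk : 1 ≤ k)
    {G : Type*} [Group G] [TopologicalSpace G] [IsTopologicalGroup G]
    [CompactSpace G] [T2Space G] [TotallyDisconnectedSpace G]
    (x y : G)
    (hgen : Dense ((Subgroup.closure {x, y} : Subgroup G) : Set G))
    (hrel : x * y * x⁻¹ = y ^ (1 + p ^ k))
    (hnab : ¬ ∀ a b : G, a * b = b * a)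
    (θ : G →* ℤ_[p]ˣ) (hθc : Continuous θ)
    (hθx : ((θ x : ℤ_[p])) = 1 + (p : ℤ_[p]) ^ k)
    (hθy : θ y = 1)
    (P : G → ℤ_[p] → G)
    (hPcont : ∀ g : G, Continuous (P g))
    (hPint : ∀ (g : G) (n : ℤ), P g (n : ℤ_[p]) = g ^ n) :
    ∀ g ∈ θ.ker, ∀ h : G, h * g * h⁻¹ = P g ((θ h : ℤ_[p])) := by
  classical
  have hPnat : ∀ (g : G) (n : ℕ), P g ((n : ℤ_[p])) = g ^ n := by
    intro g n
    have h1 := hPint g (n : ℤ)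
    rw [zpow_natCast] at h1
    have hc : (((n:ℤ)):ℤ_[p]) = ((n:ℕ) : ℤ_[p]) := by push_cast; ring
    rwa [hc] at h1
  have hP0 : ∀ g : G, P g 0 = 1 := fun g => by simpa using hPint g 0
  have hP1 : ∀ g : G, P g 1 = g := fun g => by simpa using hPint g 1
  have ext1 : ∀ (F1 F2 : ℤ_[p] → G), Continuous F1 → Continuous F2 →
      (∀ n : ℤ, F1 ((n : ℤ_[p])) = F2 ((n : ℤ_[p]))) → ∀ c, F1 c = F2 c := by
    intro F1 F2 h1 h2 hint c
    exact congrFun (PadicInt.denseRange_intCast.equalizer h1 h2 (funext fun n => hint n)) c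
  have ext2 : ∀ (F1 F2 : ℤ_[p] × ℤ_[p] → G), Continuous F1 → Continuous F2 →
      (∀ m n : ℤ, F1 ((m:ℤ_[p]), (n:ℤ_[p])) = F2 ((m:ℤ_[p]), (n:ℤ_[p]))) →
      ∀ cd, F1 cd = F2 cd := by
    intro F1 F2 h1 h2 hint cd
    have hd : DenseRange (Prod.map (Int.cast : ℤ → ℤ_[p]) (Int.cast : ℤ → ℤ_[p])) :=
      PadicInt.denseRange_intCast.prodMap PadicInt.denseRange_intCast
    exact congrFun (hd.equalizer h1 h2 (funext fun mn => hint mn.1 mn.2)) cd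
  have hadd : ∀ (g : G) (a b : ℤ_[p]), P g (a + b) = P g a * P g b := by
    intro g a b
    exact ext2 (fun cd => P g (cd.1 + cd.2)) (fun cd => P g cd.1 * P g cd.2)
      ((hPcont g).comp (continuous_fst.add continuous_snd))
      (((hPcont g).comp continuous_fst).mul ((hPcont g).comp continuous_snd))
      (fun m n => by
        have hc : ((m:ℤ_[p]) + (n:ℤ_[p])) = (((m + n : ℤ)) : ℤ_[p]) := by push_cast; ring
        show P g ((m:ℤ_[p]) + (n:ℤ_[p])) = P g (m:ℤ_[p]) * P g (n:ℤ_[p])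
        rw [hc, hPint, hPint, hPint]
        exact zpow_add g m n) (a, b)
  have hneg : ∀ (g : G) (a : ℤ_[p]), P g (-a) = (P g a)⁻¹ := by
    intro g a
    have h1 : P g a * P g (-a) = 1 := by
      rw [← hadd]
      simpa using hP0 g
    exact eq_inv_of_mul_eq_one_right h1
  have hconj : ∀ (h g : G) (a : ℤ_[p]), h * P g a * h⁻¹ = P (h * g * h⁻¹) a := by
    intro h g
    refine ext1 (fun a => h * P g a * h⁻¹) (fun a => P (h * g * h⁻¹) a)
      ((continuous_const.mul (hPcont g)).mul continuous_const) (hPcont _) ?_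
    intro n
    show h * P g (n:ℤ_[p]) * h⁻¹ = P (h * g * h⁻¹) (n:ℤ_[p])
    rw [hPint, hPint]
    exact conj_zpow.symm
  have hzpow : ∀ (g : G) (n : ℤ) (a : ℤ_[p]), (P g a) ^ n = P g (a * n) := by
    intro g n
    refine ext1 (fun a => (P g a) ^ n) (fun a => P g (a * n)) ((hPcont g).zpow n)
      ((hPcont g).comp (continuous_id.mul continuous_const)) ?_
    intro m
    show (P g (m:ℤ_[p])) ^ n = P g ((m:ℤ_[p]) * (n:ℤ_[p]))
    have hc : ((m:ℤ_[p]) * (n:ℤ_[p])) = (((m * n : ℤ)) : ℤ_[p]) := by push_cast; ring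
    rw [hPint, hc, hPint, ← zpow_mul]
  have hPP : ∀ (g : G) (a b : ℤ_[p]), P (P g a) b = P g (a * b) := by
    intro g a
    refine ext1 (fun b => P (P g a) b) (fun b => P g (a * b)) (hPcont _)
      ((hPcont g).comp (continuous_const.mul continuous_id)) ?_
    intro n
    show P (P g a) (n:ℤ_[p]) = P g (a * (n:ℤ_[p]))
    rw [hPint, hzpow]
  have hθunit : ∀ (g : G), θ g = 1 → ∀ c, θ (P g c) = 1 := by
    intro g hg
    have h1 : ∀ c, ((θ (P g c) : ℤ_[p])) = ((1 : ℤ_[p]ˣ) : ℤ_[p]) := by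
      refine extPadic (fun c => ((θ (P g c) : ℤ_[p]))) (fun _ => ((1:ℤ_[p]ˣ):ℤ_[p]))
        (Units.continuous_val.comp (hθc.comp (hPcont g))) continuous_const ?_
      intro n
      show ((θ (P g ((n:ℤ):ℤ_[p])) : ℤ_[p])) = _
      rw [hPint, map_zpow, hg, one_zpow]
    intro c
    exact Units.ext (h1 c)
  set fx : ℤ_[p] → ℤ_[p] := fun a => ((θ (P x a) : ℤ_[p])) with hfx
  have hfxc : Continuous fx := Units.continuous_val.comp (hθc.comp (hPcont x))
  have hfxadd : ∀ a b, fx (a + b) = fx a * fx b := by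
    intro a b
    simp only [hfx]
    rw [hadd, map_mul, Units.val_mul]
  have hfx1 : fx 1 = 1 + (p:ℤ_[p])^k := by
    simp only [hfx]
    rw [hP1]
    exact hθx
  have hyrel : ∀ c, x * P y c * x⁻¹ = P y (((θ x : ℤ_[p])) * c) := by
    intro c
    rw [hconj, hrel]
    have h1 : y ^ (1 + p ^ k) = P y (((1 + p ^ k : ℕ) : ℤ_[p])) := (hPnat y _).symm
    rw [h1, hPP]
    congr 1
    rw [hθx]
    push_cast
    ring
  have hyrelinv : ∀ c, x⁻¹ * P y c * x = P y ((((θ x)⁻¹ : ℤ_[p]ˣ) : ℤ_[p]) * c) := by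
    intro c
    have h1 := hyrel ((((θ x)⁻¹ : ℤ_[p]ˣ) : ℤ_[p]) * c)
    have h2 : ((θ x : ℤ_[p])) * ((((θ x)⁻¹ : ℤ_[p]ˣ) : ℤ_[p]) * c) = c := by
      rw [← mul_assoc, ← Units.val_mul, mul_inv_cancel, Units.val_one, one_mul]
    rw [h2] at h1
    rw [← h1]
    group
  have hint2 : ∀ n : ℤ, ∀ c, x ^ n * P y c * x ^ (-n)
      = P y ((((θ x)^n : ℤ_[p]ˣ) : ℤ_[p]) * c) := by
    intro n
    induction n using Int.induction_on with
    | zero => intro c; simp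
    | succ i ih =>
      intro c
      have e1 : x ^ ((i:ℤ)+1) = x * x ^ (i:ℤ) := by
        rw [show (i:ℤ)+1 = 1+(i:ℤ) from by ring, zpow_one_add]
      have e2 : x ^ (-((i:ℤ)+1)) = x ^ (-(i:ℤ)) * x⁻¹ := by
        rw [show -((i:ℤ)+1) = -(i:ℤ) + (-1) from by ring, zpow_add, zpow_neg_one]
      rw [e1, e2]
      calc x * x ^ (i:ℤ) * P y c * (x ^ (-(i:ℤ)) * x⁻¹)
          = x * (x ^ (i:ℤ) * P y c * x ^ (-(i:ℤ))) * x⁻¹ := by group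
        _ = x * P y ((((θ x)^(i:ℤ) : ℤ_[p]ˣ) : ℤ_[p]) * c) * x⁻¹ := by rw [ih c]
        _ = P y (((θ x : ℤ_[p])) * ((((θ x)^(i:ℤ) : ℤ_[p]ˣ) : ℤ_[p]) * c)) := hyrel _
        _ = P y ((((θ x)^((i:ℤ)+1) : ℤ_[p]ˣ) : ℤ_[p]) * c) := by
            congr 1
            rw [zpow_add_one, Units.val_mul]
            ring
    | pred i ih =>
      intro c
      have e1 : x ^ (-(i:ℤ)-1) = x⁻¹ * x ^ (-(i:ℤ)) := by
        rw [show -(i:ℤ)-1 = (-1) + (-(i:ℤ)) from by ring, zpow_add, zpow_neg_one]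
      have e2 : x ^ (-(-(i:ℤ)-1)) = x ^ (-(-(i:ℤ))) * x := by
        rw [show -(-(i:ℤ)-1) = -(-(i:ℤ)) + 1 from by ring, zpow_add_one]
      rw [e1, e2]
      calc x⁻¹ * x ^ (-(i:ℤ)) * P y c * (x ^ (-(-(i:ℤ))) * x)
          = x⁻¹ * (x ^ (-(i:ℤ)) * P y c * x ^ (-(-(i:ℤ)))) * x := by group
        _ = x⁻¹ * P y ((((θ x)^(-(i:ℤ)) : ℤ_[p]ˣ) : ℤ_[p]) * c) * x := by rw [ih c]
        _ = P y ((((θ x)⁻¹ : ℤ_[p]ˣ) : ℤ_[p]) * ((((θ x)^(-(i:ℤ)) : ℤ_[p]ˣ) : ℤ_[p]) * c)) :=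
            hyrelinv _
        _ = P y ((((θ x)^(-(i:ℤ)-1) : ℤ_[p]ˣ) : ℤ_[p]) * c) := by
            congr 1
            rw [show -(i:ℤ)-1 = -(i:ℤ) + (-1) from by ring, zpow_add, zpow_neg_one,
              Units.val_mul]
            ring
  have hCONJ : ∀ a c, P x a * P y c * P x (-a) = P y (fx a * c) := by
    intro a c
    revert a
    refine ext1 (fun a => P x a * P y c * P x (-a)) (fun a => P y (fx a * c))
      (((hPcont x).mul continuous_const).mul ((hPcont x).comp continuous_neg))
      ((hPcont y).comp (hfxc.mul continuous_const)) ?_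
    intro n
    show P x ((n:ℤ_[p])) * P y c * P x (-(n:ℤ_[p])) = P y (fx ((n:ℤ_[p])) * c)
    have hc : (-((n:ℤ_[p]))) = (((-n : ℤ)) : ℤ_[p]) := by push_cast; ring
    have hfxn : fx ((n:ℤ_[p])) = (((θ x) ^ n : ℤ_[p]ˣ) : ℤ_[p]) := by
      simp only [hfx]
      rw [hPint, map_zpow]
    rw [hPint, hc, hPint, hfxn]
    exact hint2 n c
  have hSurj : ∀ g : G, ∃ a c : ℤ_[p], g = P x a * P y c := by
    intro g
    set S : Set G := Set.range (fun ac : ℤ_[p] × ℤ_[p] => P x ac.1 * P y ac.2) with hS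
    have hScpt : IsCompact S := isCompact_range
      (((hPcont x).comp continuous_fst).mul ((hPcont y).comp continuous_snd))
    have hScl : IsClosed S := hScpt.isClosed
    have hsub : ((Subgroup.closure {x, y} : Subgroup G) : Set G) ⊆ S := by
      intro g hg
      refine Subgroup.closure_induction ?_ ?_ ?_ ?_ hg
      · intro z hz
        simp only [Set.mem_insert_iff, Set.mem_singleton_iff] at hz
        rcases hz with rfl | rfl
        · exact ⟨(1, 0), by show P z 1 * P y 0 = z; rw [hP1, hP0, mul_one]⟩
        · exact ⟨(0, 1), by show P x 0 * P z 1 = z; rw [hP1, hP0, one_mul]⟩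
      · exact ⟨(0, 0), by show P x 0 * P y 0 = 1; rw [hP0, hP0, one_mul]⟩
      · rintro g1 g2 hg1 hg2 ⟨⟨a, c⟩, h1⟩ ⟨⟨a', c'⟩, h2⟩
        refine ⟨(a + a', fx (-a') * c + c'), ?_⟩
        show P x (a + a') * P y (fx (-a') * c + c') = g1 * g2
        have hmove : P y c * P x a' = P x a' * P y (fx (-a') * c) := by
          have h3 := hCONJ (-a') c
          rw [neg_neg] at h3
          calc P y c * P x a'
              = P x a' * (P x (-a') * P y c * P x a') := by
                rw [hneg]
                group
            _ = P x a' * P y (fx (-a') * c) := by rw [h3]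
        rw [← h1, ← h2]
        calc P x (a + a') * P y (fx (-a') * c + c')
            = (P x a * P x a') * (P y (fx (-a') * c) * P y c') := by rw [hadd, hadd]
          _ = P x a * (P x a' * P y (fx (-a') * c)) * P y c' := by group
          _ = P x a * (P y c * P x a') * P y c' := by rw [← hmove]
          _ = (P x a * P y c) * (P x a' * P y c') := by group
      · rintro g1 hg1 ⟨⟨a, c⟩, h1⟩
        refine ⟨(-a, fx a * (-c)), ?_⟩
        show P x (-a) * P y (fx a * -c) = g1⁻¹
        have h3 := hCONJ a (-c)
        rw [← h1, ← h3, hneg y c, hneg x a]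
        group
    have hdS : Dense S := Dense.mono hsub hgen
    have hSuniv : S = Set.univ := by
      rw [← hScl.closure_eq, hdS.closure_eq]
    have hgS : g ∈ S := by rw [hSuniv]; trivial
    obtain ⟨⟨a, c⟩, hac⟩ := hgS
    exact ⟨a, c, hac.symm⟩
  have hfxker : ∀ a, fx a = 1 → a = 0 := keyNT k hk fx hfxc hfxadd hfx1
  intro g hg h
  obtain ⟨a, c, hgac⟩ := hSurj g
  have hθg : θ g = 1 := MonoidHom.mem_ker.mp hg
  have hθyc : θ (P y c) = 1 := hθunit y hθy c
  have hθxa1 : θ (P x a) = 1 := by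
    have h1 : θ g = θ (P x a) * θ (P y c) := by rw [hgac, map_mul]
    rw [hθg, hθyc, mul_one] at h1
    exact h1.symm
  have ha0 : a = 0 := hfxker a (by simp only [hfx]; rw [hθxa1, Units.val_one])
  have hgc : g = P y c := by rw [hgac, ha0, hP0, one_mul]
  obtain ⟨a', d, hhad⟩ := hSurj h
  have hθh : ((θ h : ℤ_[p])) = fx a' := by
    simp only [hfx]
    rw [hhad, map_mul, hθunit y hθy d, mul_one]
  have hLHS : h * g * h⁻¹ = P y (fx a' * c) := by
    rw [hhad, hgc]
    have h1 : P y d * P y c * (P y d)⁻¹ = P y c := by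
      rw [← hneg, ← hadd, ← hadd]
      congr 1
      ring
    calc P x a' * P y d * (P y c) * (P x a' * P y d)⁻¹
        = P x a' * (P y d * P y c * (P y d)⁻¹) * (P x a')⁻¹ := by group
      _ = P x a' * P y c * (P x a')⁻¹ := by rw [h1]
      _ = P x a' * P y c * P x (-a') := by rw [hneg]
      _ = P y (fx a' * c) := hCONJ a' c
  have hRHS : P g ((θ h : ℤ_[p])) = P y (fx a' * c) := by
    rw [hgc, hθh, hPP]
    congr 1
    ring
  rw [hLHS, hRHS]
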